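/- For any i ≥ 1 and 0 ≤ l, q ≤ M the following equal-index covariances hold: (1) if 0 < l < q, E(U_{i,l,m,n} U_{i,q,m,n}) = θ_n^{l+q} E ξ_0⁴ − 2 θ_n^{l+q} (E ξ_0²)² + θ_n^{q−l} (E ξ_0²)² Σ_{j=0}^{m−1−(q−l)} θ_n^{2j}; (2) if 0 < q < l, E(U_{i,l,m,n} U_{i,q,m,n}) = θ_n^{l+q} E ξ_0⁴ − 2 θ_n^{l+q} (E ξ_0²)² + θ_n^{l−q} (E ξ_0²)² Σ_{p=0}^{m−1−(l−q)} θ_n^{2p}; (3) if l = q ≠ 0, E(U_{i,l,m,n}²) = θ_n^{2l} E ξ_0⁴ − 2 θ_n^{2l} (E ξ_0²)² + (E ξ_0²)² (2 Σ_{j=1}^{m−1} θ_n^{2j} + 1); (4) if q > 0, E(U_{i,0,m,n} U_{i,q,m,n}) = θ_n^q E ξ_0⁴ − θ_n^q (E ξ_0²)² + 2 (E ξ_0²)² θ_n^q Σ_{j=1}^{m−1−q} θ_n^{2j}. -/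

import Mathlib

open MeasureTheory ProbabilityTheory Filter Real

noncomputable def dd (x y : ℤ) : ℝ := if x = y then 1 else 0

noncomputable def Gq (s2 s4 : ℝ) (a b c d : ℤ) : ℝ :=
  s2 ^ 2 * (dd a b * dd c d + dd a c * dd b d + dd a d * dd b c) +
    (s4 - 3 * s2 ^ 2) * (dd a b * dd a c * dd a d)

lemma B1eval (θ s2 s4 : ℝ) (i m l q : ℕ) (hlq : l ≤ q) (hq : q < m) :
    ∑ j ∈ Finset.Icc 0 (m-1), ∑ j' ∈ Finset.Icc 0 (m-1),
      (θ^j * θ^j') * Gq s2 s4 ((i:ℤ)+l-j) i ((i:ℤ)+q-j') i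
    = (s4 - s2^2) * (θ^l * θ^q)
      + s2^2 * θ^(q-l) * ∑ j ∈ Finset.range (m - (q-l)), θ^(2*j) := by
  have hstep : ∀ j ∈ Finset.Icc 0 (m-1), ∀ j' ∈ Finset.Icc 0 (m-1),
      (θ^j * θ^j') * Gq s2 s4 ((i:ℤ)+l-j) i ((i:ℤ)+q-j') i
      = (if j' = q then (if j = l then (s4 - s2^2)*(θ^j*θ^j') else 0) else 0)
        + (if j' = j + (q-l) then s2^2*(θ^j*θ^j') else 0) := by
    intro j _ j' _
    have c1 : ((i:ℤ)+l-j = (i:ℤ)) ↔ j = l := by omega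
    have c2 : ((i:ℤ)+q-j' = (i:ℤ)) ↔ j' = q := by omega
    have c3 : ((i:ℤ)+l-j = (i:ℤ)+q-j') ↔ j' = j + (q-l) := by omega
    have c4 : ((i:ℤ) = (i:ℤ)+q-j') ↔ j' = q := by omega
    simp only [Gq, dd, c1, c2, c3, c4, eq_self_iff_true, if_true]
    by_cases h1 : j = l <;> by_cases h2 : j' = q
    · have h4 : l + (q-l) = q := by omega
      simp [h1, h2, h4]; ring
    · have h3 : ¬ j' = l + (q-l) := by omega
      simp [h1, h2, h3]
    · have h3 : ¬ q = j + (q-l) := by omega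
      simp [h1, h2, h3]
    · by_cases h3 : j' = j + (q-l)
      · simp [h1, h2, h3]; ring
      · simp [h1, h2, h3]
  rw [Finset.sum_congr rfl (fun j hj => Finset.sum_congr rfl (fun j' hj' => hstep j hj j' hj'))]
  rw [Finset.sum_congr rfl (fun j _ => Finset.sum_add_distrib), Finset.sum_add_distrib]
  congr 1
  · rw [Finset.sum_congr rfl (fun j _ => Finset.sum_ite_eq' (Finset.Icc 0 (m-1)) q
      (fun j' => if j = l then (s4 - s2^2)*(θ^j*θ^j') else 0))]
    rw [Finset.sum_congr rfl (fun j _ => if_pos (by simp [Finset.mem_Icc]; omega))]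
    rw [Finset.sum_ite_eq' (Finset.Icc 0 (m-1)) l
      (fun j => (s4 - s2^2)*(θ^j*θ^q)), if_pos (by simp [Finset.mem_Icc]; omega)]
  · rw [Finset.sum_congr rfl (fun j _ => Finset.sum_ite_eq' (Finset.Icc 0 (m-1)) (j+(q-l))
      (fun j' => s2^2*(θ^j*θ^j')))]
    rw [← Finset.sum_filter]
    have hf : (Finset.Icc 0 (m-1)).filter (fun j => j + (q-l) ∈ Finset.Icc 0 (m-1))
        = Finset.range (m - (q-l)) := by
      ext x; simp [Finset.mem_Icc, Finset.mem_filter, Finset.mem_range]; omega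
    rw [hf, Finset.mul_sum]
    exact Finset.sum_congr rfl (fun j _ => by rw [pow_add θ j (q-l), two_mul, pow_add]; ring)

lemma B2eval (θ s2 s4 : ℝ) (i m l q : ℕ) (hq1 : 1 ≤ q) :
    ∑ j ∈ Finset.Icc 0 (m-1), ∑ j' ∈ Finset.Icc 1 (m-1),
      (θ^j * θ^j') * Gq s2 s4 ((i:ℤ)+l-j) i ((i:ℤ)+q) ((i:ℤ)-j') = 0 := by
  apply Finset.sum_eq_zero; intro j _
  apply Finset.sum_eq_zero; intro j' hj'
  have h1 : 1 ≤ j' := (Finset.mem_Icc.mp hj').1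
  have hcd : ¬((i:ℤ)+q = (i:ℤ)-j') := by omega
  have hbd : ¬((i:ℤ) = (i:ℤ)-j') := by omega
  have hbc : ¬((i:ℤ) = (i:ℤ)+q) := by omega
  by_cases hjl : j = l
  · have hac : ¬((i:ℤ)+l-j = (i:ℤ)+q) := by omega
    simp [Gq, dd, hcd, hbd, hbc, hac]
  · have hab : ¬((i:ℤ)+l-j = (i:ℤ)) := by omega
    simp [Gq, dd, hcd, hbd, hbc, hab]

lemma B3eval (θ s2 s4 : ℝ) (i m l q : ℕ) (hl1 : 1 ≤ l) :
    ∑ j ∈ Finset.Icc 1 (m-1), ∑ j' ∈ Finset.Icc 0 (m-1),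
      (θ^j * θ^j') * Gq s2 s4 ((i:ℤ)+l) ((i:ℤ)-j) ((i:ℤ)+q-j') i = 0 := by
  apply Finset.sum_eq_zero; intro j hj
  apply Finset.sum_eq_zero; intro j' _
  have h1 : 1 ≤ j := (Finset.mem_Icc.mp hj).1
  have hab : ¬((i:ℤ)+l = (i:ℤ)-j) := by omega
  have hbd : ¬((i:ℤ)-j = (i:ℤ)) := by omega
  have had : ¬((i:ℤ)+l = (i:ℤ)) := by omega
  simp [Gq, dd, hab, hbd, had]

lemma B3eval0 (θ s2 s4 : ℝ) (i m l q : ℕ) (hl : l = 0) (hq1 : 1 ≤ q) (hq : q < m) :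
    ∑ j ∈ Finset.Icc 1 (m-1), ∑ j' ∈ Finset.Icc 0 (m-1),
      (θ^j * θ^j') * Gq s2 s4 ((i:ℤ)+l) ((i:ℤ)-j) ((i:ℤ)+q-j') i
    = s2^2 * θ^q * ∑ j ∈ Finset.Icc 1 (m-1-q), θ^(2*j) := by
  subst hl
  have hstep : ∀ j ∈ Finset.Icc 1 (m-1), ∀ j' ∈ Finset.Icc 0 (m-1),
      (θ^j * θ^j') * Gq s2 s4 ((i:ℤ)+(0:ℕ)) ((i:ℤ)-j) ((i:ℤ)+q-j') i
      = (if j' = q + j then s2^2*(θ^j*θ^j') else 0) := by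
    intro j hj j' _
    have h1 : 1 ≤ j := (Finset.mem_Icc.mp hj).1
    have hab : ¬((i:ℤ)+(0:ℕ) = (i:ℤ)-j) := by omega
    have hbd : ¬((i:ℤ)-j = (i:ℤ)) := by omega
    have had : ((i:ℤ)+(0:ℕ) = (i:ℤ)) ↔ True := by simp
    have hbc : ((i:ℤ)-j = (i:ℤ)+q-j') ↔ j' = q + j := by omega
    simp only [Gq, dd, hab, hbd, had, hbc, eq_self_iff_true, if_true, if_false]
    by_cases h3 : j' = q + j
    · simp [h3]; ring
    · simp [h3, hab, hbd]
  rw [Finset.sum_congr rfl (fun j hj => Finset.sum_congr rfl (fun j' hj' => hstep j hj j' hj'))]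
  rw [Finset.sum_congr rfl (fun j _ => Finset.sum_ite_eq' (Finset.Icc 0 (m-1)) (q+j)
      (fun j' => s2^2*(θ^j*θ^j')))]
  rw [← Finset.sum_filter]
  have hf : (Finset.Icc 1 (m-1)).filter (fun j => q + j ∈ Finset.Icc 0 (m-1))
      = Finset.Icc 1 (m-1-q) := by
    ext x; simp [Finset.mem_Icc, Finset.mem_filter]; omega
  rw [hf, Finset.mul_sum]
  exact Finset.sum_congr rfl (fun j _ => by rw [pow_add θ q j, two_mul, pow_add]; ring)

lemma B4evalne (θ s2 s4 : ℝ) (i m l q : ℕ) (hlq : l ≠ q) :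
    ∑ j ∈ Finset.Icc 1 (m-1), ∑ j' ∈ Finset.Icc 1 (m-1),
      (θ^j * θ^j') * Gq s2 s4 ((i:ℤ)+l) ((i:ℤ)-j) ((i:ℤ)+q) ((i:ℤ)-j') = 0 := by
  apply Finset.sum_eq_zero; intro j hj
  apply Finset.sum_eq_zero; intro j' hj'
  have h1 : 1 ≤ j := (Finset.mem_Icc.mp hj).1
  have h2 : 1 ≤ j' := (Finset.mem_Icc.mp hj').1
  have hab : ¬((i:ℤ)+l = (i:ℤ)-j) := by omega
  have had : ¬((i:ℤ)+l = (i:ℤ)-j') := by omega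
  have hbc : ¬((i:ℤ)-j = (i:ℤ)+q) := by omega
  have hac : ¬((i:ℤ)+l = (i:ℤ)+q) := by omega
  simp [Gq, dd, hab, had, hbc, hac]

lemma B4evaleq (θ s2 s4 : ℝ) (i m l q : ℕ) (hlq : l = q) :
    ∑ j ∈ Finset.Icc 1 (m-1), ∑ j' ∈ Finset.Icc 1 (m-1),
      (θ^j * θ^j') * Gq s2 s4 ((i:ℤ)+l) ((i:ℤ)-j) ((i:ℤ)+q) ((i:ℤ)-j')
    = s2^2 * ∑ j ∈ Finset.Icc 1 (m-1), θ^(2*j) := by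
  subst hlq
  have hstep : ∀ j ∈ Finset.Icc 1 (m-1), ∀ j' ∈ Finset.Icc 1 (m-1),
      (θ^j * θ^j') * Gq s2 s4 ((i:ℤ)+l) ((i:ℤ)-j) ((i:ℤ)+l) ((i:ℤ)-j')
      = (if j' = j then s2^2*(θ^j*θ^j') else 0) := by
    intro j hj j' hj'
    have h1 : 1 ≤ j := (Finset.mem_Icc.mp hj).1
    have h2 : 1 ≤ j' := (Finset.mem_Icc.mp hj').1
    have hab : ¬((i:ℤ)+l = (i:ℤ)-j) := by omega
    have had : ¬((i:ℤ)+l = (i:ℤ)-j') := by omega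
    have hbc : ¬((i:ℤ)-j = (i:ℤ)+l) := by omega
    have hbd : ((i:ℤ)-j = (i:ℤ)-j') ↔ j' = j := by omega
    simp only [Gq, dd, hab, had, hbc, hbd, eq_self_iff_true, if_true, if_false]
    by_cases h3 : j' = j
    · simp [h3]; ring
    · simp [h3, hab, had, hbc]
  rw [Finset.sum_congr rfl (fun j hj => Finset.sum_congr rfl (fun j' hj' => hstep j hj j' hj'))]
  rw [Finset.sum_congr rfl (fun j hj => Finset.sum_ite_eq' (Finset.Icc 1 (m-1)) j
      (fun j' => s2^2*(θ^j*θ^j')))]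
  rw [Finset.mul_sum]
  refine Finset.sum_congr rfl (fun j hj => ?_)
  rw [if_pos hj, two_mul, pow_add]

section Aux

set_option linter.unusedSectionVars false

variable {Ω : Type*} [MeasureSpace Ω] [IsProbabilityMeasure (ℙ : Measure Ω)]
  {ξ : ℤ → Ω → ℝ}

lemma half4 : (2:ENNReal)⁻¹ = 4⁻¹ + 4⁻¹ := by
  rw [← two_mul, show ((4:ENNReal) = 2*2) from by norm_num,
    ENNReal.mul_inv (by norm_num) (by norm_num), ← mul_assoc,
    ENNReal.mul_inv_cancel (by norm_num) (by norm_num), one_mul]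

lemma memL4 (hident : ∀ k, IdentDistrib (ξ k) (ξ 0) ℙ ℙ) (hL4 : MemLp (ξ 0) 4 ℙ)
    (k : ℤ) : MemLp (ξ k) 4 ℙ := (hident k).symm.memLp_snd hL4

lemma memL2mul (hident : ∀ k, IdentDistrib (ξ k) (ξ 0) ℙ ℙ) (hL4 : MemLp (ξ 0) 4 ℙ)
    (a b : ℤ) : MemLp (fun ω => ξ a ω * ξ b ω) 2 ℙ := by
  have h := (memL4 hident hL4 b).smul (memL4 hident hL4 a)
    (p := 4) (q := 4) (r := 2) (hpqr := ⟨half4.symm⟩)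
  exact h

lemma int2 (hident : ∀ k, IdentDistrib (ξ k) (ξ 0) ℙ ℙ) (hL4 : MemLp (ξ 0) 4 ℙ)
    (a b : ℤ) : Integrable (fun ω => ξ a ω * ξ b ω) ℙ :=
  (memL2mul hident hL4 a b).integrable (by norm_num)

lemma int4 (hident : ∀ k, IdentDistrib (ξ k) (ξ 0) ℙ ℙ) (hL4 : MemLp (ξ 0) 4 ℙ)
    (a b c d : ℤ) : Integrable (fun ω => ξ a ω * ξ b ω * ξ c ω * ξ d ω) ℙ := by
  have h := (memL2mul hident hL4 c d).smul (memL2mul hident hL4 a b)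
    (p := 2) (q := 2) (r := 1)
    (hpqr := ⟨by simp only [one_div, inv_one]
                 rw [← two_mul, ENNReal.mul_inv_cancel (by norm_num) (by norm_num)]⟩)
  have h2 : MemLp (fun ω => ξ a ω * ξ b ω * ξ c ω * ξ d ω) 1 ℙ := by
    have he : ((fun ω => ξ a ω * ξ b ω) • fun ω => ξ c ω * ξ d ω)
        = fun ω => ξ a ω * ξ b ω * ξ c ω * ξ d ω := by
      funext ω; simp only [Pi.smul_apply', Pi.smul_apply, smul_eq_mul]; ring
    rwa [he] at h
  exact memLp_one_iff_integrable.mp h2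



variable (hmeas : ∀ k, Measurable (ξ k))
  (hindep : iIndepFun ξ ℙ)
  (hident : ∀ k, IdentDistrib (ξ k) (ξ 0) ℙ ℙ)
  (hcentered : 𝔼[ξ 0] = 0)
  (hL4 : MemLp (ξ 0) 4 ℙ)

include hmeas hindep hident hcentered hL4

lemma E1 (a : ℤ) : 𝔼[ξ a] = 0 := ((hident a).integral_eq).trans hcentered

lemma Esq (a : ℤ) : 𝔼[fun ω => ξ a ω * ξ a ω] = 𝔼[fun ω => (ξ 0 ω) ^ 2] := by
  have h := ((hident a).comp (u := fun x : ℝ => x * x)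
    (by exact measurable_id.mul measurable_id)).integral_eq
  calc 𝔼[fun ω => ξ a ω * ξ a ω] = 𝔼[(fun x : ℝ => x * x) ∘ (ξ a)] := rfl
    _ = 𝔼[(fun x : ℝ => x * x) ∘ (ξ 0)] := h
    _ = 𝔼[fun ω => (ξ 0 ω) ^ 2] := by
        apply integral_congr_ae; filter_upwards with ω; simp [Function.comp]; ring

lemma E4 (a : ℤ) : 𝔼[fun ω => ξ a ω * ξ a ω * ξ a ω * ξ a ω] = 𝔼[fun ω => (ξ 0 ω) ^ 4] := by
  have h := ((hident a).comp (u := fun x : ℝ => x * x * x * x)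
    (by exact ((measurable_id.mul measurable_id).mul measurable_id).mul measurable_id)).integral_eq
  calc 𝔼[fun ω => ξ a ω * ξ a ω * ξ a ω * ξ a ω]
      = 𝔼[(fun x : ℝ => x * x * x * x) ∘ (ξ a)] := rfl
    _ = 𝔼[(fun x : ℝ => x * x * x * x) ∘ (ξ 0)] := h
    _ = 𝔼[fun ω => (ξ 0 ω) ^ 4] := by
        apply integral_congr_ae; filter_upwards with ω; simp [Function.comp]; ring

lemma Epair (a b : ℤ) (hab : a ≠ b) : 𝔼[fun ω => ξ a ω * ξ b ω] = 0 := by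
  have h : 𝔼[fun ω => ξ a ω * ξ b ω] = 𝔼[ξ a] * 𝔼[ξ b] := (hindep.indepFun hab).integral_mul_eq_mul_integral
    (hmeas a).aestronglyMeasurable (hmeas b).aestronglyMeasurable
  rw [h, E1 hmeas hindep hident hcentered hL4, zero_mul]

lemma Emulmul (a b c d : ℤ) (hac : a ≠ c) (had : a ≠ d) (hbc : b ≠ c) (hbd : b ≠ d) :
    𝔼[fun ω => ξ a ω * ξ b ω * ξ c ω * ξ d ω] =
      𝔼[fun ω => ξ a ω * ξ b ω] * 𝔼[fun ω => ξ c ω * ξ d ω] := by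
  have h := (hindep.indepFun_mul_mul hmeas a b c d hac had hbc hbd).integral_mul_eq_mul_integral
    ((hmeas a).mul (hmeas b)).aestronglyMeasurable
    ((hmeas c).mul (hmeas d)).aestronglyMeasurable
  have he : (fun ω => ξ a ω * ξ b ω * ξ c ω * ξ d ω) = (ξ a * ξ b) * (ξ c * ξ d) := by
    funext ω; simp [mul_assoc]
  rw [he]; exact h

lemma Ecube (a b : ℤ) (hab : a ≠ b) :
    𝔼[fun ω => ξ a ω * ξ a ω * ξ a ω * ξ b ω] = 0 := by
  have hcube : Measurable (fun x : ℝ => x * x * x) :=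
    (measurable_id.mul measurable_id).mul measurable_id
  have h : 𝔼[fun ω => ((fun x : ℝ => x * x * x) ∘ ξ a) ω * (id ∘ ξ b) ω]
      = 𝔼[(fun x : ℝ => x * x * x) ∘ ξ a] * 𝔼[id ∘ ξ b] := ((hindep.indepFun hab).comp hcube measurable_id).integral_mul_eq_mul_integral
    ((((hmeas a).mul (hmeas a)).mul (hmeas a))).aestronglyMeasurable
    (hmeas b).aestronglyMeasurable
  have he : (fun ω => ξ a ω * ξ a ω * ξ a ω * ξ b ω)
      = fun ω => ((fun x : ℝ => x * x * x) ∘ ξ a) ω * (id ∘ ξ b) ω := rfl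
  rw [he, h, show (id ∘ ξ b) = ξ b from rfl, E1 hmeas hindep hident hcentered hL4, mul_zero]

lemma quad (a b c d : ℤ) :
    𝔼[fun ω => ξ a ω * ξ b ω * ξ c ω * ξ d ω] =
      Gq (𝔼[fun ω => (ξ 0 ω) ^ 2]) (𝔼[fun ω => (ξ 0 ω) ^ 4]) a b c d := by
  have P : ∀ x y : ℤ, x ≠ y → 𝔼[fun ω => ξ x ω * ξ y ω] = 0 :=
    Epair hmeas hindep hident hcentered hL4
  have S : ∀ x : ℤ, 𝔼[fun ω => ξ x ω * ξ x ω] = 𝔼[fun ω => (ξ 0 ω) ^ 2] :=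
    Esq hmeas hindep hident hcentered hL4
  have MM := Emulmul hmeas hindep hident hcentered hL4
  have C := Ecube hmeas hindep hident hcentered hL4
  have F := E4 hmeas hindep hident hcentered hL4
  by_cases hab : a = b
  · subst hab
    by_cases hcd : c = d
    · subst hcd
      by_cases hac : a = c
      · subst hac
        rw [F a]; simp [Gq, dd]; ring
      · rw [MM a a c c hac hac hac hac, S a, S c]
        simp [Gq, dd, hac, Ne.symm hac]; ring
    · by_cases hac : a = c
      · subst hac
        have had : a ≠ d := hcd
        rw [C a d had]
        simp [Gq, dd, had, Ne.symm had]
      · by_cases had : a = d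
        · subst had
          rw [show (fun ω => ξ a ω * ξ a ω * ξ c ω * ξ a ω)
              = (fun ω => ξ a ω * ξ a ω * ξ a ω * ξ c ω) from funext fun ω => by ring,
            C a c hac]
          simp [Gq, dd, hac, Ne.symm hac, hcd, Ne.symm hcd]
        · rw [MM a a c d hac had hac had, P c d hcd, mul_zero]
          simp [Gq, dd, hac, Ne.symm hac, had, Ne.symm had, hcd, Ne.symm hcd]
  · by_cases hcd : c = d
    · subst hcd
      by_cases hca : c = a
      · rw [hca]
        rw [show (fun ω => ξ a ω * ξ b ω * ξ a ω * ξ a ω)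
            = (fun ω => ξ a ω * ξ a ω * ξ a ω * ξ b ω) from funext fun ω => by ring,
          C a b hab]
        simp [Gq, dd, hab, Ne.symm hab]
      · by_cases hcb : c = b
        · rw [hcb]
          rw [show (fun ω => ξ a ω * ξ b ω * ξ b ω * ξ b ω)
              = (fun ω => ξ b ω * ξ b ω * ξ b ω * ξ a ω) from funext fun ω => by ring,
            C b a (Ne.symm hab)]
          simp [Gq, dd, hab, Ne.symm hab]
        · rw [MM a b c c (fun h => hca h.symm) (fun h => hca h.symm)
            (fun h => hcb h.symm) (fun h => hcb h.symm), P a b hab, zero_mul]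
          simp [Gq, dd, hab, Ne.symm hab, hca, Ne.symm hca, hcb, Ne.symm hcb]
    · by_cases hac : a = c
      · subst hac
        have had : a ≠ d := hcd
        by_cases hbd : b = d
        · subst hbd
          rw [show (fun ω => ξ a ω * ξ b ω * ξ a ω * ξ b ω)
              = (fun ω => ξ a ω * ξ a ω * ξ b ω * ξ b ω) from funext fun ω => by ring,
            MM a a b b hab hab hab hab, S a, S b]
          simp [Gq, dd, hab, Ne.symm hab]; ring
        · rw [show (fun ω => ξ a ω * ξ b ω * ξ a ω * ξ d ω)
              = (fun ω => ξ a ω * ξ a ω * ξ b ω * ξ d ω) from funext fun ω => by ring,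
            MM a a b d hab had hab had, P b d hbd, mul_zero]
          simp [Gq, dd, hab, Ne.symm hab, had, Ne.symm had, hbd, Ne.symm hbd]
      · by_cases had : a = d
        · subst had
          have hca : c ≠ a := fun h => hac h.symm
          by_cases hbc : b = c
          · subst hbc
            rw [show (fun ω => ξ a ω * ξ b ω * ξ b ω * ξ a ω)
                = (fun ω => ξ a ω * ξ a ω * ξ b ω * ξ b ω) from funext fun ω => by ring,
              MM a a b b hab hab hab hab, S a, S b]
            simp [Gq, dd, hab, Ne.symm hab, hac, Ne.symm hac]; ring
          · rw [show (fun ω => ξ a ω * ξ b ω * ξ c ω * ξ a ω)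
                = (fun ω => ξ a ω * ξ a ω * ξ b ω * ξ c ω) from funext fun ω => by ring,
              MM a a b c hab hac hab hac, P b c hbc, mul_zero]
            simp [Gq, dd, hab, Ne.symm hab, hac, Ne.symm hac, hbc, Ne.symm hbc, hcd, Ne.symm hcd]
        · by_cases hbc : b = c
          · subst hbc
            have hbd : b ≠ d := hcd
            rw [show (fun ω => ξ a ω * ξ b ω * ξ b ω * ξ d ω)
                = (fun ω => ξ b ω * ξ b ω * ξ a ω * ξ d ω) from funext fun ω => by ring,
              MM b b a d (Ne.symm hab) hbd (Ne.symm hab) hbd, P a d had, mul_zero]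
            simp [Gq, dd, hab, Ne.symm hab, hac, Ne.symm hac, had, Ne.symm had, hbd, Ne.symm hbd]
          · by_cases hbd : b = d
            · subst hbd
              have hbc2 : b ≠ c := hbc
              rw [show (fun ω => ξ a ω * ξ b ω * ξ c ω * ξ b ω)
                  = (fun ω => ξ b ω * ξ b ω * ξ a ω * ξ c ω) from funext fun ω => by ring,
                MM b b a c (Ne.symm hab) hbc2 (Ne.symm hab) hbc2, P a c hac, mul_zero]
              simp [Gq, dd, hab, Ne.symm hab, hac, Ne.symm hac, hbc, Ne.symm hbc, hcd, Ne.symm hcd]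
            · rw [MM a b c d hac had hbc hbd, P a b hab, zero_mul]
              simp [Gq, dd, hab, Ne.symm hab, hac, Ne.symm hac, had, Ne.symm had,
                hbc, Ne.symm hbc, hbd, Ne.symm hbd, hcd, Ne.symm hcd]

lemma pairf (a b : ℤ) :
    𝔼[fun ω => ξ a ω * ξ b ω] = 𝔼[fun ω => (ξ 0 ω) ^ 2] * dd a b := by
  by_cases h : a = b
  · subst h
    rw [Esq hmeas hindep hident hcentered hL4 a]; simp [dd]
  · rw [Epair hmeas hindep hident hcentered hL4 a b h]; simp [dd, h]

omit hmeas hindep hcentered in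
lemma intsum (s : Finset ℕ) (c : ℕ → ℝ) (a b : ℕ → ℤ) :
    Integrable (fun ω => ∑ j ∈ s, c j * ξ (a j) ω * ξ (b j) ω) ℙ := by
  apply integrable_finset_sum
  intro j _
  have : (fun ω => c j * ξ (a j) ω * ξ (b j) ω)
      = fun ω => c j * (ξ (a j) ω * ξ (b j) ω) := funext fun ω => by ring
  rw [this]
  exact (int2 hident hL4 (a j) (b j)).const_mul _

omit hmeas hindep hcentered in
lemma Esum1 (s : Finset ℕ) (c : ℕ → ℝ) (a b : ℕ → ℤ) :
    𝔼[fun ω => ∑ j ∈ s, c j * ξ (a j) ω * ξ (b j) ω]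
      = ∑ j ∈ s, c j * 𝔼[fun ω => ξ (a j) ω * ξ (b j) ω] := by
  rw [integral_finset_sum s (fun j _ => by
    have : (fun ω => c j * ξ (a j) ω * ξ (b j) ω)
        = fun ω => c j * (ξ (a j) ω * ξ (b j) ω) := funext fun ω => by ring
    rw [this]
    exact (int2 hident hL4 (a j) (b j)).const_mul _)]
  refine Finset.sum_congr rfl fun j _ => ?_
  simp_rw [mul_assoc]
  exact integral_const_mul _ _

omit hmeas hindep hcentered in
lemma dsum_eq (s t : Finset ℕ) (c c' : ℕ → ℝ) (a b a' b' : ℕ → ℤ) :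
    (fun ω => (∑ j ∈ s, c j * ξ (a j) ω * ξ (b j) ω) *
        (∑ j ∈ t, c' j * ξ (a' j) ω * ξ (b' j) ω))
      = fun ω => ∑ j ∈ s, ∑ j' ∈ t,
          (c j * c' j') * (ξ (a j) ω * ξ (b j) ω * ξ (a' j') ω * ξ (b' j') ω) := by
  funext ω
  rw [Finset.sum_mul_sum]
  exact Finset.sum_congr rfl fun j _ => Finset.sum_congr rfl fun j' _ => by ring

omit hmeas hindep hcentered in
lemma intdsum (s t : Finset ℕ) (c c' : ℕ → ℝ) (a b a' b' : ℕ → ℤ) :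
    Integrable (fun ω => (∑ j ∈ s, c j * ξ (a j) ω * ξ (b j) ω) *
        (∑ j ∈ t, c' j * ξ (a' j) ω * ξ (b' j) ω)) ℙ := by
  rw [dsum_eq hident hL4]
  exact integrable_finset_sum _ fun j _ => integrable_finset_sum _ fun j' _ =>
    (int4 hident hL4 (a j) (b j) (a' j') (b' j')).const_mul _

omit hmeas hindep hcentered in
lemma Edsum (s t : Finset ℕ) (c c' : ℕ → ℝ) (a b a' b' : ℕ → ℤ) :
    𝔼[fun ω => (∑ j ∈ s, c j * ξ (a j) ω * ξ (b j) ω) *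
        (∑ j ∈ t, c' j * ξ (a' j) ω * ξ (b' j) ω)]
      = ∑ j ∈ s, ∑ j' ∈ t, (c j * c' j') *
          𝔼[fun ω => ξ (a j) ω * ξ (b j) ω * ξ (a' j') ω * ξ (b' j') ω] := by
  rw [dsum_eq hident hL4]
  rw [integral_finset_sum s (fun j _ => integrable_finset_sum _ fun j' _ =>
    (int4 hident hL4 (a j) (b j) (a' j') (b' j')).const_mul _)]
  refine Finset.sum_congr rfl fun j _ => ?_
  rw [integral_finset_sum t (fun j' _ =>
    (int4 hident hL4 (a j) (b j) (a' j') (b' j')).const_mul _)]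
  exact Finset.sum_congr rfl fun j' _ => integral_const_mul _ _

lemma EUU (θ : ℝ) (m : ℕ) (hm1 : 1 ≤ m) (i l q : ℕ) (hl : l < m) (hq : q < m)
    (U : ℕ → ℕ → Ω → ℝ)
    (hU : ∀ k l ω, U k l ω =
      ∑ j ∈ Finset.Icc 1 (m - 1), θ ^ j * ξ ((k : ℤ) + l - j) ω * ξ (k : ℤ) ω +
      ∑ j ∈ Finset.Icc 1 (m - 1), θ ^ j * ξ ((k : ℤ) + l) ω * ξ ((k : ℤ) - j) ω +
      ξ ((k : ℤ) + l) ω * ξ (k : ℤ) ω - θ ^ l * 𝔼[fun ω => (ξ 0 ω) ^ 2]) :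
    𝔼[fun ω => U i l ω * U i q ω]
      = (∑ j ∈ Finset.Icc 0 (m-1), ∑ j' ∈ Finset.Icc 0 (m-1),
          (θ^j * θ^j') * Gq (𝔼[fun ω => (ξ 0 ω) ^ 2]) (𝔼[fun ω => (ξ 0 ω) ^ 4]) ((i:ℤ)+l-j) i ((i:ℤ)+q-j') i)
      + (∑ j ∈ Finset.Icc 0 (m-1), ∑ j' ∈ Finset.Icc 1 (m-1),
          (θ^j * θ^j') * Gq (𝔼[fun ω => (ξ 0 ω) ^ 2]) (𝔼[fun ω => (ξ 0 ω) ^ 4]) ((i:ℤ)+l-j) i ((i:ℤ)+q) ((i:ℤ)-j'))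
      + (∑ j ∈ Finset.Icc 1 (m-1), ∑ j' ∈ Finset.Icc 0 (m-1),
          (θ^j * θ^j') * Gq (𝔼[fun ω => (ξ 0 ω) ^ 2]) (𝔼[fun ω => (ξ 0 ω) ^ 4]) ((i:ℤ)+l) ((i:ℤ)-j) ((i:ℤ)+q-j') i)
      + (∑ j ∈ Finset.Icc 1 (m-1), ∑ j' ∈ Finset.Icc 1 (m-1),
          (θ^j * θ^j') * Gq (𝔼[fun ω => (ξ 0 ω) ^ 2]) (𝔼[fun ω => (ξ 0 ω) ^ 4]) ((i:ℤ)+l) ((i:ℤ)-j) ((i:ℤ)+q) ((i:ℤ)-j'))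
      - θ^(l+q) * (𝔼[fun ω => (ξ 0 ω) ^ 2])^2 := by
  have hrep : ∀ r : ℕ, ∀ ω, U i r ω =
      (∑ j ∈ Finset.Icc 0 (m-1), θ^j * ξ ((i:ℤ)+r-j) ω * ξ (i:ℤ) ω) + (∑ j ∈ Finset.Icc 1 (m-1), θ^j * ξ ((i:ℤ)+r) ω * ξ ((i:ℤ)-j) ω) - θ^r * 𝔼[fun ω => (ξ 0 ω) ^ 2] := by
    intro r ω
    rw [hU]
    have h0 : Finset.Icc 0 (m-1) = insert 0 (Finset.Icc 1 (m-1)) := by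
      ext x; simp [Finset.mem_Icc]; omega
    rw [h0, Finset.sum_insert (by simp)]
    simp only [pow_zero, Nat.cast_zero, sub_zero, one_mul]
    ring
  -- expectations of linear parts
  have EX : ∀ r : ℕ, r < m → 𝔼[fun ω => ∑ j ∈ Finset.Icc 0 (m-1), θ^j * ξ ((i:ℤ)+r-j) ω * ξ (i:ℤ) ω] = θ^r * 𝔼[fun ω => (ξ 0 ω) ^ 2] := by
    intro r hr
    rw [Esum1 hident hL4 _ (fun j => θ^j) (fun j => (i:ℤ)+r-j) (fun _ => (i:ℤ))]
    have hc : ∀ j ∈ Finset.Icc 0 (m-1),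
        θ^j * 𝔼[fun ω => ξ ((i:ℤ)+r-j) ω * ξ (i:ℤ) ω]
          = if j = r then θ^r * 𝔼[fun ω => (ξ 0 ω) ^ 2] else 0 := by
      intro j hj
      rw [pairf hmeas hindep hident hcentered hL4]
      by_cases hjr : j = r
      · subst hjr
        simp only [dd]
        rw [if_pos (by omega)]
        simp
      · rw [if_neg hjr]
        simp only [dd]
        rw [if_neg (by omega)]
        ring
    rw [Finset.sum_congr rfl hc, Finset.sum_ite_eq' (Finset.Icc 0 (m-1)) r
      (fun _ => θ^r * 𝔼[fun ω => (ξ 0 ω) ^ 2]), if_pos (by simp [Finset.mem_Icc]; omega)]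
  have EY : ∀ r : ℕ, 𝔼[fun ω => ∑ j ∈ Finset.Icc 1 (m-1), θ^j * ξ ((i:ℤ)+r) ω * ξ ((i:ℤ)-j) ω] = 0 := by
    intro r
    rw [Esum1 hident hL4 _ (fun j => θ^j) (fun _ => (i:ℤ)+r) (fun j => (i:ℤ)-j)]
    apply Finset.sum_eq_zero
    intro j hj
    have h1 : 1 ≤ j := (Finset.mem_Icc.mp hj).1
    rw [pairf hmeas hindep hident hcentered hL4]
    simp only [dd]
    rw [if_neg (by omega)]
    ring
  -- integrability
  have hiX : ∀ r : ℕ, Integrable (fun ω => ∑ j ∈ Finset.Icc 0 (m-1), θ^j * ξ ((i:ℤ)+r-j) ω * ξ (i:ℤ) ω) ℙ := fun r =>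
    intsum hident hL4 _ (fun j => θ^j) (fun j => (i:ℤ)+r-j) (fun _ => (i:ℤ))
  have hiY : ∀ r : ℕ, Integrable (fun ω => ∑ j ∈ Finset.Icc 1 (m-1), θ^j * ξ ((i:ℤ)+r) ω * ξ ((i:ℤ)-j) ω) ℙ := fun r =>
    intsum hident hL4 _ (fun j => θ^j) (fun _ => (i:ℤ)+r) (fun j => (i:ℤ)-j)
  have hiXX : Integrable (fun ω => (∑ j ∈ Finset.Icc 0 (m-1), θ^j * ξ ((i:ℤ)+l-j) ω * ξ (i:ℤ) ω) * (∑ j ∈ Finset.Icc 0 (m-1), θ^j * ξ ((i:ℤ)+q-j) ω * ξ (i:ℤ) ω)) ℙ :=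
    intdsum hident hL4 _ _ (fun j => θ^j) (fun j => θ^j)
      (fun j => (i:ℤ)+l-j) (fun _ => (i:ℤ)) (fun j => (i:ℤ)+q-j) (fun _ => (i:ℤ))
  have hiXY : Integrable (fun ω => (∑ j ∈ Finset.Icc 0 (m-1), θ^j * ξ ((i:ℤ)+l-j) ω * ξ (i:ℤ) ω) * (∑ j ∈ Finset.Icc 1 (m-1), θ^j * ξ ((i:ℤ)+q) ω * ξ ((i:ℤ)-j) ω)) ℙ :=
    intdsum hident hL4 _ _ (fun j => θ^j) (fun j => θ^j)
      (fun j => (i:ℤ)+l-j) (fun _ => (i:ℤ)) (fun _ => (i:ℤ)+q) (fun j => (i:ℤ)-j)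
  have hiYX : Integrable (fun ω => (∑ j ∈ Finset.Icc 1 (m-1), θ^j * ξ ((i:ℤ)+l) ω * ξ ((i:ℤ)-j) ω) * (∑ j ∈ Finset.Icc 0 (m-1), θ^j * ξ ((i:ℤ)+q-j) ω * ξ (i:ℤ) ω)) ℙ :=
    intdsum hident hL4 _ _ (fun j => θ^j) (fun j => θ^j)
      (fun _ => (i:ℤ)+l) (fun j => (i:ℤ)-j) (fun j => (i:ℤ)+q-j) (fun _ => (i:ℤ))
  have hiYY : Integrable (fun ω => (∑ j ∈ Finset.Icc 1 (m-1), θ^j * ξ ((i:ℤ)+l) ω * ξ ((i:ℤ)-j) ω) * (∑ j ∈ Finset.Icc 1 (m-1), θ^j * ξ ((i:ℤ)+q) ω * ξ ((i:ℤ)-j) ω)) ℙ :=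
    intdsum hident hL4 _ _ (fun j => θ^j) (fun j => θ^j)
      (fun _ => (i:ℤ)+l) (fun j => (i:ℤ)-j) (fun _ => (i:ℤ)+q) (fun j => (i:ℤ)-j)
  -- values of the four product expectations
  have EXX : 𝔼[fun ω => (∑ j ∈ Finset.Icc 0 (m-1), θ^j * ξ ((i:ℤ)+l-j) ω * ξ (i:ℤ) ω) * (∑ j ∈ Finset.Icc 0 (m-1), θ^j * ξ ((i:ℤ)+q-j) ω * ξ (i:ℤ) ω)]
      = ∑ j ∈ Finset.Icc 0 (m-1), ∑ j' ∈ Finset.Icc 0 (m-1), (θ^j * θ^j') *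
          𝔼[fun ω => ξ ((i:ℤ)+l-j) ω * ξ (i:ℤ) ω * ξ ((i:ℤ)+q-j') ω * ξ (i:ℤ) ω] :=
    Edsum hident hL4 _ _ (fun j => θ^j) (fun j => θ^j)
      (fun j => (i:ℤ)+l-j) (fun _ => (i:ℤ)) (fun j => (i:ℤ)+q-j) (fun _ => (i:ℤ))
  have EXY : 𝔼[fun ω => (∑ j ∈ Finset.Icc 0 (m-1), θ^j * ξ ((i:ℤ)+l-j) ω * ξ (i:ℤ) ω) * (∑ j ∈ Finset.Icc 1 (m-1), θ^j * ξ ((i:ℤ)+q) ω * ξ ((i:ℤ)-j) ω)]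
      = ∑ j ∈ Finset.Icc 0 (m-1), ∑ j' ∈ Finset.Icc 1 (m-1), (θ^j * θ^j') *
          𝔼[fun ω => ξ ((i:ℤ)+l-j) ω * ξ (i:ℤ) ω * ξ ((i:ℤ)+q) ω * ξ ((i:ℤ)-j') ω] :=
    Edsum hident hL4 _ _ (fun j => θ^j) (fun j => θ^j)
      (fun j => (i:ℤ)+l-j) (fun _ => (i:ℤ)) (fun _ => (i:ℤ)+q) (fun j => (i:ℤ)-j)
  have EYX : 𝔼[fun ω => (∑ j ∈ Finset.Icc 1 (m-1), θ^j * ξ ((i:ℤ)+l) ω * ξ ((i:ℤ)-j) ω) * (∑ j ∈ Finset.Icc 0 (m-1), θ^j * ξ ((i:ℤ)+q-j) ω * ξ (i:ℤ) ω)]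
      = ∑ j ∈ Finset.Icc 1 (m-1), ∑ j' ∈ Finset.Icc 0 (m-1), (θ^j * θ^j') *
          𝔼[fun ω => ξ ((i:ℤ)+l) ω * ξ ((i:ℤ)-j) ω * ξ ((i:ℤ)+q-j') ω * ξ (i:ℤ) ω] :=
    Edsum hident hL4 _ _ (fun j => θ^j) (fun j => θ^j)
      (fun _ => (i:ℤ)+l) (fun j => (i:ℤ)-j) (fun j => (i:ℤ)+q-j) (fun _ => (i:ℤ))
  have EYY : 𝔼[fun ω => (∑ j ∈ Finset.Icc 1 (m-1), θ^j * ξ ((i:ℤ)+l) ω * ξ ((i:ℤ)-j) ω) * (∑ j ∈ Finset.Icc 1 (m-1), θ^j * ξ ((i:ℤ)+q) ω * ξ ((i:ℤ)-j) ω)]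
      = ∑ j ∈ Finset.Icc 1 (m-1), ∑ j' ∈ Finset.Icc 1 (m-1), (θ^j * θ^j') *
          𝔼[fun ω => ξ ((i:ℤ)+l) ω * ξ ((i:ℤ)-j) ω * ξ ((i:ℤ)+q) ω * ξ ((i:ℤ)-j') ω] :=
    Edsum hident hL4 _ _ (fun j => θ^j) (fun j => θ^j)
      (fun _ => (i:ℤ)+l) (fun j => (i:ℤ)-j) (fun _ => (i:ℤ)+q) (fun j => (i:ℤ)-j)
  simp only [quad hmeas hindep hident hcentered hL4] at EXX EXY EYX EYY
  -- expand the product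
  have hfun : (fun ω => U i l ω * U i q ω) = fun ω =>
      ((∑ j ∈ Finset.Icc 0 (m-1), θ^j * ξ ((i:ℤ)+l-j) ω * ξ (i:ℤ) ω) * (∑ j ∈ Finset.Icc 0 (m-1), θ^j * ξ ((i:ℤ)+q-j) ω * ξ (i:ℤ) ω) + (∑ j ∈ Finset.Icc 0 (m-1), θ^j * ξ ((i:ℤ)+l-j) ω * ξ (i:ℤ) ω) * (∑ j ∈ Finset.Icc 1 (m-1), θ^j * ξ ((i:ℤ)+q) ω * ξ ((i:ℤ)-j) ω)
        + (∑ j ∈ Finset.Icc 1 (m-1), θ^j * ξ ((i:ℤ)+l) ω * ξ ((i:ℤ)-j) ω) * (∑ j ∈ Finset.Icc 0 (m-1), θ^j * ξ ((i:ℤ)+q-j) ω * ξ (i:ℤ) ω) + (∑ j ∈ Finset.Icc 1 (m-1), θ^j * ξ ((i:ℤ)+l) ω * ξ ((i:ℤ)-j) ω) * (∑ j ∈ Finset.Icc 1 (m-1), θ^j * ξ ((i:ℤ)+q) ω * ξ ((i:ℤ)-j) ω))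
      + ((θ^l * 𝔼[fun ω => (ξ 0 ω) ^ 2]) * (θ^q * 𝔼[fun ω => (ξ 0 ω) ^ 2])
        - (θ^l * 𝔼[fun ω => (ξ 0 ω) ^ 2]) * ((∑ j ∈ Finset.Icc 0 (m-1), θ^j * ξ ((i:ℤ)+q-j) ω * ξ (i:ℤ) ω) + (∑ j ∈ Finset.Icc 1 (m-1), θ^j * ξ ((i:ℤ)+q) ω * ξ ((i:ℤ)-j) ω))
        - (θ^q * 𝔼[fun ω => (ξ 0 ω) ^ 2]) * ((∑ j ∈ Finset.Icc 0 (m-1), θ^j * ξ ((i:ℤ)+l-j) ω * ξ (i:ℤ) ω) + (∑ j ∈ Finset.Icc 1 (m-1), θ^j * ξ ((i:ℤ)+l) ω * ξ ((i:ℤ)-j) ω))) := by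
    funext ω
    rw [hrep l ω, hrep q ω]
    ring
  have e1q : 𝔼[fun ω => (∑ j ∈ Finset.Icc 0 (m-1), θ^j * ξ ((i:ℤ)+q-j) ω * ξ (i:ℤ) ω) + (∑ j ∈ Finset.Icc 1 (m-1), θ^j * ξ ((i:ℤ)+q) ω * ξ ((i:ℤ)-j) ω)]
      = 𝔼[fun ω => ∑ j ∈ Finset.Icc 0 (m-1), θ^j * ξ ((i:ℤ)+q-j) ω * ξ (i:ℤ) ω] + 𝔼[fun ω => ∑ j ∈ Finset.Icc 1 (m-1), θ^j * ξ ((i:ℤ)+q) ω * ξ ((i:ℤ)-j) ω] := integral_add (hiX q) (hiY q)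
  have e1l : 𝔼[fun ω => (∑ j ∈ Finset.Icc 0 (m-1), θ^j * ξ ((i:ℤ)+l-j) ω * ξ (i:ℤ) ω) + (∑ j ∈ Finset.Icc 1 (m-1), θ^j * ξ ((i:ℤ)+l) ω * ξ ((i:ℤ)-j) ω)]
      = 𝔼[fun ω => ∑ j ∈ Finset.Icc 0 (m-1), θ^j * ξ ((i:ℤ)+l-j) ω * ξ (i:ℤ) ω] + 𝔼[fun ω => ∑ j ∈ Finset.Icc 1 (m-1), θ^j * ξ ((i:ℤ)+l) ω * ξ ((i:ℤ)-j) ω] := integral_add (hiX l) (hiY l)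
  have P1a : 𝔼[fun ω => (∑ j ∈ Finset.Icc 0 (m-1), θ^j * ξ ((i:ℤ)+l-j) ω * ξ (i:ℤ) ω) * (∑ j ∈ Finset.Icc 0 (m-1), θ^j * ξ ((i:ℤ)+q-j) ω * ξ (i:ℤ) ω) + (∑ j ∈ Finset.Icc 0 (m-1), θ^j * ξ ((i:ℤ)+l-j) ω * ξ (i:ℤ) ω) * (∑ j ∈ Finset.Icc 1 (m-1), θ^j * ξ ((i:ℤ)+q) ω * ξ ((i:ℤ)-j) ω)]
      = 𝔼[fun ω => (∑ j ∈ Finset.Icc 0 (m-1), θ^j * ξ ((i:ℤ)+l-j) ω * ξ (i:ℤ) ω) * (∑ j ∈ Finset.Icc 0 (m-1), θ^j * ξ ((i:ℤ)+q-j) ω * ξ (i:ℤ) ω)] + 𝔼[fun ω => (∑ j ∈ Finset.Icc 0 (m-1), θ^j * ξ ((i:ℤ)+l-j) ω * ξ (i:ℤ) ω) * (∑ j ∈ Finset.Icc 1 (m-1), θ^j * ξ ((i:ℤ)+q) ω * ξ ((i:ℤ)-j) ω)] :=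
    integral_add hiXX hiXY
  have P1b : 𝔼[fun ω => (∑ j ∈ Finset.Icc 0 (m-1), θ^j * ξ ((i:ℤ)+l-j) ω * ξ (i:ℤ) ω) * (∑ j ∈ Finset.Icc 0 (m-1), θ^j * ξ ((i:ℤ)+q-j) ω * ξ (i:ℤ) ω) + (∑ j ∈ Finset.Icc 0 (m-1), θ^j * ξ ((i:ℤ)+l-j) ω * ξ (i:ℤ) ω) * (∑ j ∈ Finset.Icc 1 (m-1), θ^j * ξ ((i:ℤ)+q) ω * ξ ((i:ℤ)-j) ω)
        + (∑ j ∈ Finset.Icc 1 (m-1), θ^j * ξ ((i:ℤ)+l) ω * ξ ((i:ℤ)-j) ω) * (∑ j ∈ Finset.Icc 0 (m-1), θ^j * ξ ((i:ℤ)+q-j) ω * ξ (i:ℤ) ω)]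
      = 𝔼[fun ω => (∑ j ∈ Finset.Icc 0 (m-1), θ^j * ξ ((i:ℤ)+l-j) ω * ξ (i:ℤ) ω) * (∑ j ∈ Finset.Icc 0 (m-1), θ^j * ξ ((i:ℤ)+q-j) ω * ξ (i:ℤ) ω) + (∑ j ∈ Finset.Icc 0 (m-1), θ^j * ξ ((i:ℤ)+l-j) ω * ξ (i:ℤ) ω) * (∑ j ∈ Finset.Icc 1 (m-1), θ^j * ξ ((i:ℤ)+q) ω * ξ ((i:ℤ)-j) ω)]
        + 𝔼[fun ω => (∑ j ∈ Finset.Icc 1 (m-1), θ^j * ξ ((i:ℤ)+l) ω * ξ ((i:ℤ)-j) ω) * (∑ j ∈ Finset.Icc 0 (m-1), θ^j * ξ ((i:ℤ)+q-j) ω * ξ (i:ℤ) ω)] :=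
    integral_add (hiXX.add hiXY) hiYX
  have P1c : 𝔼[fun ω => (∑ j ∈ Finset.Icc 0 (m-1), θ^j * ξ ((i:ℤ)+l-j) ω * ξ (i:ℤ) ω) * (∑ j ∈ Finset.Icc 0 (m-1), θ^j * ξ ((i:ℤ)+q-j) ω * ξ (i:ℤ) ω) + (∑ j ∈ Finset.Icc 0 (m-1), θ^j * ξ ((i:ℤ)+l-j) ω * ξ (i:ℤ) ω) * (∑ j ∈ Finset.Icc 1 (m-1), θ^j * ξ ((i:ℤ)+q) ω * ξ ((i:ℤ)-j) ω)
        + (∑ j ∈ Finset.Icc 1 (m-1), θ^j * ξ ((i:ℤ)+l) ω * ξ ((i:ℤ)-j) ω) * (∑ j ∈ Finset.Icc 0 (m-1), θ^j * ξ ((i:ℤ)+q-j) ω * ξ (i:ℤ) ω) + (∑ j ∈ Finset.Icc 1 (m-1), θ^j * ξ ((i:ℤ)+l) ω * ξ ((i:ℤ)-j) ω) * (∑ j ∈ Finset.Icc 1 (m-1), θ^j * ξ ((i:ℤ)+q) ω * ξ ((i:ℤ)-j) ω)]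
      = 𝔼[fun ω => (∑ j ∈ Finset.Icc 0 (m-1), θ^j * ξ ((i:ℤ)+l-j) ω * ξ (i:ℤ) ω) * (∑ j ∈ Finset.Icc 0 (m-1), θ^j * ξ ((i:ℤ)+q-j) ω * ξ (i:ℤ) ω) + (∑ j ∈ Finset.Icc 0 (m-1), θ^j * ξ ((i:ℤ)+l-j) ω * ξ (i:ℤ) ω) * (∑ j ∈ Finset.Icc 1 (m-1), θ^j * ξ ((i:ℤ)+q) ω * ξ ((i:ℤ)-j) ω)
          + (∑ j ∈ Finset.Icc 1 (m-1), θ^j * ξ ((i:ℤ)+l) ω * ξ ((i:ℤ)-j) ω) * (∑ j ∈ Finset.Icc 0 (m-1), θ^j * ξ ((i:ℤ)+q-j) ω * ξ (i:ℤ) ω)]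
        + 𝔼[fun ω => (∑ j ∈ Finset.Icc 1 (m-1), θ^j * ξ ((i:ℤ)+l) ω * ξ ((i:ℤ)-j) ω) * (∑ j ∈ Finset.Icc 1 (m-1), θ^j * ξ ((i:ℤ)+q) ω * ξ ((i:ℤ)-j) ω)] :=
    integral_add ((hiXX.add hiXY).add hiYX) hiYY
  have P2a : 𝔼[fun ω => (θ^l * 𝔼[fun ω => (ξ 0 ω) ^ 2]) * ((∑ j ∈ Finset.Icc 0 (m-1), θ^j * ξ ((i:ℤ)+q-j) ω * ξ (i:ℤ) ω) + (∑ j ∈ Finset.Icc 1 (m-1), θ^j * ξ ((i:ℤ)+q) ω * ξ ((i:ℤ)-j) ω))]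
      = (θ^l * 𝔼[fun ω => (ξ 0 ω) ^ 2]) * 𝔼[fun ω => (∑ j ∈ Finset.Icc 0 (m-1), θ^j * ξ ((i:ℤ)+q-j) ω * ξ (i:ℤ) ω) + (∑ j ∈ Finset.Icc 1 (m-1), θ^j * ξ ((i:ℤ)+q) ω * ξ ((i:ℤ)-j) ω)] := integral_const_mul _ _
  have P2b : 𝔼[fun ω => (θ^q * 𝔼[fun ω => (ξ 0 ω) ^ 2]) * ((∑ j ∈ Finset.Icc 0 (m-1), θ^j * ξ ((i:ℤ)+l-j) ω * ξ (i:ℤ) ω) + (∑ j ∈ Finset.Icc 1 (m-1), θ^j * ξ ((i:ℤ)+l) ω * ξ ((i:ℤ)-j) ω))]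
      = (θ^q * 𝔼[fun ω => (ξ 0 ω) ^ 2]) * 𝔼[fun ω => (∑ j ∈ Finset.Icc 0 (m-1), θ^j * ξ ((i:ℤ)+l-j) ω * ξ (i:ℤ) ω) + (∑ j ∈ Finset.Icc 1 (m-1), θ^j * ξ ((i:ℤ)+l) ω * ξ ((i:ℤ)-j) ω)] := integral_const_mul _ _
  have P2c : 𝔼[fun ω => (θ^l * 𝔼[fun ω => (ξ 0 ω) ^ 2]) * (θ^q * 𝔼[fun ω => (ξ 0 ω) ^ 2])
        - (θ^l * 𝔼[fun ω => (ξ 0 ω) ^ 2]) * ((∑ j ∈ Finset.Icc 0 (m-1), θ^j * ξ ((i:ℤ)+q-j) ω * ξ (i:ℤ) ω) + (∑ j ∈ Finset.Icc 1 (m-1), θ^j * ξ ((i:ℤ)+q) ω * ξ ((i:ℤ)-j) ω))]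
      = 𝔼[fun _ => (θ^l * 𝔼[fun ω => (ξ 0 ω) ^ 2]) * (θ^q * 𝔼[fun ω => (ξ 0 ω) ^ 2])]
        - 𝔼[fun ω => (θ^l * 𝔼[fun ω => (ξ 0 ω) ^ 2]) * ((∑ j ∈ Finset.Icc 0 (m-1), θ^j * ξ ((i:ℤ)+q-j) ω * ξ (i:ℤ) ω) + (∑ j ∈ Finset.Icc 1 (m-1), θ^j * ξ ((i:ℤ)+q) ω * ξ ((i:ℤ)-j) ω))] :=
    integral_sub (integrable_const _) (((hiX q).add (hiY q)).const_mul _)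
  have P2d : 𝔼[fun ω => (θ^l * 𝔼[fun ω => (ξ 0 ω) ^ 2]) * (θ^q * 𝔼[fun ω => (ξ 0 ω) ^ 2])
        - (θ^l * 𝔼[fun ω => (ξ 0 ω) ^ 2]) * ((∑ j ∈ Finset.Icc 0 (m-1), θ^j * ξ ((i:ℤ)+q-j) ω * ξ (i:ℤ) ω) + (∑ j ∈ Finset.Icc 1 (m-1), θ^j * ξ ((i:ℤ)+q) ω * ξ ((i:ℤ)-j) ω))
        - (θ^q * 𝔼[fun ω => (ξ 0 ω) ^ 2]) * ((∑ j ∈ Finset.Icc 0 (m-1), θ^j * ξ ((i:ℤ)+l-j) ω * ξ (i:ℤ) ω) + (∑ j ∈ Finset.Icc 1 (m-1), θ^j * ξ ((i:ℤ)+l) ω * ξ ((i:ℤ)-j) ω))]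
      = 𝔼[fun ω => (θ^l * 𝔼[fun ω => (ξ 0 ω) ^ 2]) * (θ^q * 𝔼[fun ω => (ξ 0 ω) ^ 2])
          - (θ^l * 𝔼[fun ω => (ξ 0 ω) ^ 2]) * ((∑ j ∈ Finset.Icc 0 (m-1), θ^j * ξ ((i:ℤ)+q-j) ω * ξ (i:ℤ) ω) + (∑ j ∈ Finset.Icc 1 (m-1), θ^j * ξ ((i:ℤ)+q) ω * ξ ((i:ℤ)-j) ω))]
        - 𝔼[fun ω => (θ^q * 𝔼[fun ω => (ξ 0 ω) ^ 2]) * ((∑ j ∈ Finset.Icc 0 (m-1), θ^j * ξ ((i:ℤ)+l-j) ω * ξ (i:ℤ) ω) + (∑ j ∈ Finset.Icc 1 (m-1), θ^j * ξ ((i:ℤ)+l) ω * ξ ((i:ℤ)-j) ω))] :=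
    integral_sub ((integrable_const _).sub (((hiX q).add (hiY q)).const_mul _))
      (((hiX l).add (hiY l)).const_mul _)
  have Pfull : 𝔼[fun ω => U i l ω * U i q ω]
      = 𝔼[fun ω => (∑ j ∈ Finset.Icc 0 (m-1), θ^j * ξ ((i:ℤ)+l-j) ω * ξ (i:ℤ) ω) * (∑ j ∈ Finset.Icc 0 (m-1), θ^j * ξ ((i:ℤ)+q-j) ω * ξ (i:ℤ) ω) + (∑ j ∈ Finset.Icc 0 (m-1), θ^j * ξ ((i:ℤ)+l-j) ω * ξ (i:ℤ) ω) * (∑ j ∈ Finset.Icc 1 (m-1), θ^j * ξ ((i:ℤ)+q) ω * ξ ((i:ℤ)-j) ω)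
          + (∑ j ∈ Finset.Icc 1 (m-1), θ^j * ξ ((i:ℤ)+l) ω * ξ ((i:ℤ)-j) ω) * (∑ j ∈ Finset.Icc 0 (m-1), θ^j * ξ ((i:ℤ)+q-j) ω * ξ (i:ℤ) ω) + (∑ j ∈ Finset.Icc 1 (m-1), θ^j * ξ ((i:ℤ)+l) ω * ξ ((i:ℤ)-j) ω) * (∑ j ∈ Finset.Icc 1 (m-1), θ^j * ξ ((i:ℤ)+q) ω * ξ ((i:ℤ)-j) ω)]
        + 𝔼[fun ω => (θ^l * 𝔼[fun ω => (ξ 0 ω) ^ 2]) * (θ^q * 𝔼[fun ω => (ξ 0 ω) ^ 2])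
          - (θ^l * 𝔼[fun ω => (ξ 0 ω) ^ 2]) * ((∑ j ∈ Finset.Icc 0 (m-1), θ^j * ξ ((i:ℤ)+q-j) ω * ξ (i:ℤ) ω) + (∑ j ∈ Finset.Icc 1 (m-1), θ^j * ξ ((i:ℤ)+q) ω * ξ ((i:ℤ)-j) ω))
          - (θ^q * 𝔼[fun ω => (ξ 0 ω) ^ 2]) * ((∑ j ∈ Finset.Icc 0 (m-1), θ^j * ξ ((i:ℤ)+l-j) ω * ξ (i:ℤ) ω) + (∑ j ∈ Finset.Icc 1 (m-1), θ^j * ξ ((i:ℤ)+l) ω * ξ ((i:ℤ)-j) ω))] := by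
    rw [hfun]
    exact integral_add (((hiXX.add hiXY).add hiYX).add hiYY)
      (((integrable_const _).sub (((hiX q).add (hiY q)).const_mul _)).sub
        (((hiX l).add (hiY l)).const_mul _))
  have hconst : 𝔼[fun _ : Ω => (θ^l * 𝔼[fun ω => (ξ 0 ω) ^ 2]) * (θ^q * 𝔼[fun ω => (ξ 0 ω) ^ 2])]
      = (θ^l * 𝔼[fun ω => (ξ 0 ω) ^ 2]) * (θ^q * 𝔼[fun ω => (ξ 0 ω) ^ 2]) := by
    rw [integral_const]; simp
  rw [Pfull, P1c, P1b, P1a, P2d, P2c, P2a, P2b, e1q, e1l, hconst,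
    EX l hl, EX q hq, EY l, EY q, EXX, EXY, EYX, EYY, pow_add]
  ring

lemma caseLT (θ : ℝ) (M m : ℕ) (hm : 2*M < m) (U : ℕ → ℕ → Ω → ℝ)
    (hU : ∀ k l ω, U k l ω =
      ∑ j ∈ Finset.Icc 1 (m - 1), θ ^ j * ξ ((k : ℤ) + l - j) ω * ξ (k : ℤ) ω +
      ∑ j ∈ Finset.Icc 1 (m - 1), θ ^ j * ξ ((k : ℤ) + l) ω * ξ ((k : ℤ) - j) ω +
      ξ ((k : ℤ) + l) ω * ξ (k : ℤ) ω - θ ^ l * 𝔼[fun ω => (ξ 0 ω) ^ 2])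
    (i l q : ℕ) (hl0 : 0 < l) (hlq : l < q) (hqM : q ≤ M) :
    𝔼[fun ω => U i l ω * U i q ω] =
      θ ^ (l + q) * 𝔼[fun ω => (ξ 0 ω) ^ 4] - 2 * θ ^ (l + q) * (𝔼[fun ω => (ξ 0 ω) ^ 2]) ^ 2 +
        θ ^ (q - l) * (𝔼[fun ω => (ξ 0 ω) ^ 2]) ^ 2 * ∑ j ∈ Finset.range (m - (q - l)), θ ^ (2 * j) := by
  have hq : q < m := by omega
  have hl : l < m := by omega
  have hm1 : 1 ≤ m := by omega
  rw [EUU hmeas hindep hident hcentered hL4 θ m hm1 i l q hl hq U hU,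
    B1eval θ _ _ i m l q (by omega) hq,
    B2eval θ _ _ i m l q (by omega),
    B3eval θ _ _ i m l q hl0,
    B4evalne θ _ _ i m l q (by omega),
    pow_add θ l q]
  ring

end Aux


theorem U_equal_index_covariances
    {Ω : Type*} [MeasureSpace Ω] [IsProbabilityMeasure (ℙ : Measure Ω)]
    (ξ : ℤ → Ω → ℝ)
    (hmeas : ∀ k, Measurable (ξ k))
    (hindep : iIndepFun ξ ℙ)
    (hident : ∀ k, IdentDistrib (ξ k) (ξ 0) ℙ ℙ)
    (hcentered : 𝔼[ξ 0] = 0)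
    (hL4 : MemLp (ξ 0) 4 ℙ)
    (θ : ℝ) (hθ : θ ∈ Set.Ico (0 : ℝ) 1)
    (M m : ℕ) (hm : 2 * M < m)
    (U : ℕ → ℕ → Ω → ℝ)
    (hU : ∀ k l ω, U k l ω =
      ∑ j ∈ Finset.Icc 1 (m - 1), θ ^ j * ξ ((k : ℤ) + l - j) ω * ξ (k : ℤ) ω +
      ∑ j ∈ Finset.Icc 1 (m - 1), θ ^ j * ξ ((k : ℤ) + l) ω * ξ ((k : ℤ) - j) ω +
      ξ ((k : ℤ) + l) ω * ξ (k : ℤ) ω - θ ^ l * 𝔼[fun ω => (ξ 0 ω) ^ 2])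
    (i : ℕ) (hi : 1 ≤ i) :
    (∀ l q : ℕ, 0 < l → l < q → q ≤ M →
      𝔼[fun ω => U i l ω * U i q ω] =
        θ ^ (l + q) * 𝔼[fun ω => (ξ 0 ω) ^ 4] -
          2 * θ ^ (l + q) * (𝔼[fun ω => (ξ 0 ω) ^ 2]) ^ 2 +
          θ ^ (q - l) * (𝔼[fun ω => (ξ 0 ω) ^ 2]) ^ 2 *
            ∑ j ∈ Finset.range (m - (q - l)), θ ^ (2 * j)) ∧
    (∀ l q : ℕ, 0 < q → q < l → l ≤ M →
      𝔼[fun ω => U i l ω * U i q ω] =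
        θ ^ (l + q) * 𝔼[fun ω => (ξ 0 ω) ^ 4] -
          2 * θ ^ (l + q) * (𝔼[fun ω => (ξ 0 ω) ^ 2]) ^ 2 +
          θ ^ (l - q) * (𝔼[fun ω => (ξ 0 ω) ^ 2]) ^ 2 *
            ∑ p ∈ Finset.range (m - (l - q)), θ ^ (2 * p)) ∧
    (∀ l : ℕ, 0 < l → l ≤ M →
      𝔼[fun ω => (U i l ω) ^ 2] =
        θ ^ (2 * l) * 𝔼[fun ω => (ξ 0 ω) ^ 4] -
          2 * θ ^ (2 * l) * (𝔼[fun ω => (ξ 0 ω) ^ 2]) ^ 2 +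
          (𝔼[fun ω => (ξ 0 ω) ^ 2]) ^ 2 *
            (2 * ∑ j ∈ Finset.Icc 1 (m - 1), θ ^ (2 * j) + 1)) ∧
    (∀ q : ℕ, 0 < q → q ≤ M →
      𝔼[fun ω => U i 0 ω * U i q ω] =
        θ ^ q * 𝔼[fun ω => (ξ 0 ω) ^ 4] -
          θ ^ q * (𝔼[fun ω => (ξ 0 ω) ^ 2]) ^ 2 +
          2 * (𝔼[fun ω => (ξ 0 ω) ^ 2]) ^ 2 * θ ^ q *
            ∑ j ∈ Finset.Icc 1 (m - 1 - q), θ ^ (2 * j)) := by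
  refine ⟨?_, ?_, ?_, ?_⟩
  · intro l q hl0 hlq hqM
    exact caseLT hmeas hindep hident hcentered hL4 θ M m hm U hU i l q hl0 hlq hqM
  · intro l q hq0 hql hlM
    rw [show (fun ω => U i l ω * U i q ω) = (fun ω => U i q ω * U i l ω) from
        funext fun ω => mul_comm _ _,
      caseLT hmeas hindep hident hcentered hL4 θ M m hm U hU i q l hq0 hql hlM,
      Nat.add_comm q l]
  · intro l hl0 hlM
    have hlm : l < m := by omega
    have hm1 : 1 ≤ m := by omega
    rw [show (fun ω => (U i l ω) ^ 2) = (fun ω => U i l ω * U i l ω) from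
        funext fun ω => pow_two (U i l ω),
      EUU hmeas hindep hident hcentered hL4 θ m hm1 i l l hlm hlm U hU,
      B1eval θ _ _ i m l l (le_refl l) hlm,
      B2eval θ _ _ i m l l (by omega),
      B3eval θ _ _ i m l l hl0,
      B4evaleq θ _ _ i m l l rfl,
      Nat.sub_self l, Nat.sub_zero, pow_zero]
    have hsplit : Finset.range m = insert 0 (Finset.Icc 1 (m-1)) := by
      ext x
      simp [Finset.mem_range, Finset.mem_Icc, Finset.mem_insert]
      omega
    rw [hsplit, Finset.sum_insert (by simp), show 2*0 = 0 from rfl, pow_zero]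
    ring
  · intro q hq0 hqM
    have hqm : q < m := by omega
    have hm1 : 1 ≤ m := by omega
    rw [EUU hmeas hindep hident hcentered hL4 θ m hm1 i 0 q (by omega) hqm U hU,
      B1eval θ _ _ i m 0 q (by omega) hqm,
      B2eval θ _ _ i m 0 q (by omega),
      B3eval0 θ _ _ i m 0 q rfl (by omega) hqm,
      B4evalne θ _ _ i m 0 q (by omega),
      Nat.sub_zero]
    have hsplit : Finset.range (m - q) = insert 0 (Finset.Icc 1 (m-1-q)) := by
      ext x
      simp [Finset.mem_range, Finset.mem_Icc, Finset.mem_insert]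
      omega
    rw [hsplit, Finset.sum_insert (by simp), show 2*0 = 0 from rfl, pow_zero]
    ring
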